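/- Let 0 < ε ≤ 1, 0 < b ≤ π/2, and define ρ = (8bε)^{-1} on the set S* = {(cos θ, sin θ sin φ, sin θ cos φ) ∈ S² : φ ∈ [0,b]∪[π−b,π]∪[π,π+b]∪[2π−b,2π], θ ∈ [arccos ε, π − arccos ε]} and ρ = 0 elsewhere on S². Then ∫_{S²} ρ dS = 1, ∫_{S²} x² ρ dS = ε²/3, ∫_{S²} y² ρ dS = (1/2 − sin(2b)/(4b))(1 − ε²/3), ∫_{S²} z² ρ dS = (1/2 + sin(2b)/(4b))(1 − ε²/3), and all mixed second moments ∫ xy ρ dS, ∫ yz ρ dS, ∫ zx ρ dS vanish. -/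

import Mathlib

open Real

/-- The domain `S*` in the `(θ, φ)` parameter space, where the sphere is
parametrized as `(x, y, z) = (cos θ, sin θ * sin φ, sin θ * cos φ)`,
`θ ∈ [0, π]`, `φ ∈ [0, 2π)`. -/
def inSstar (ε b θ φ : ℝ) : Prop :=
  (φ ∈ Set.Icc 0 b ∪ Set.Icc (π - b) π ∪ Set.Icc π (π + b) ∪ Set.Icc (2 * π - b) (2 * π)) ∧
    θ ∈ Set.Icc (Real.arccos ε) (π - Real.arccos ε)

open Classical in
/-- The density `ρ = (8bε)⁻¹` on `S*` and `0` elsewhere, as a function of `(θ, φ)`. -/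
noncomputable def rho (ε b θ φ : ℝ) : ℝ :=
  if inSstar ε b θ φ then 1 / (8 * b * ε) else 0

namespace MomentsAux

open MeasureTheory intervalIntegral

/-- The `φ`-domain. -/
def Phi (b : ℝ) : Set ℝ :=
  Set.Icc 0 b ∪ Set.Icc (π - b) π ∪ Set.Icc π (π + b) ∪ Set.Icc (2 * π - b) (2 * π)

lemma ae_ne (u : ℝ) : ∀ᵐ x : ℝ, x ≠ u :=
  MeasureTheory.measure_eq_zero_iff_ae_notMem.mp (measure_singleton u)

lemma integral_congr_Ioo {l u : ℝ} (hlu : l ≤ u) {f g : ℝ → ℝ}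
    (h : ∀ x ∈ Set.Ioo l u, f x = g x) :
    ∫ x in l..u, f x = ∫ x in l..u, g x := by
  apply intervalIntegral.integral_congr_ae
  filter_upwards [ae_ne u] with x hxu hx
  rw [Set.uIoc_of_le hlu] at hx
  exact h x ⟨hx.1, lt_of_le_of_ne hx.2 hxu⟩

lemma ii_indicator {f : ℝ → ℝ} (hf : Continuous f) {s : Set ℝ} (hs : MeasurableSet s)
    (l u : ℝ) : IntervalIntegrable (s.indicator f) volume l u := by
  rw [intervalIntegrable_iff]
  exact (intervalIntegrable_iff.mp (hf.intervalIntegrable l u)).indicator hs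

lemma measurable_Phi (b : ℝ) : MeasurableSet (Phi b) := by
  unfold Phi
  exact (((measurableSet_Icc.union measurableSet_Icc).union measurableSet_Icc).union
    measurableSet_Icc)

lemma rho_eq (ε b θ φ : ℝ) :
    rho ε b θ φ =
      (Set.indicator (Set.Icc (Real.arccos ε) (π - Real.arccos ε)) (fun _ => (1 : ℝ)) θ) *
        (Set.indicator (Phi b) (fun _ => 1 / (8 * b * ε)) φ) := by
  by_cases h1 : θ ∈ Set.Icc (Real.arccos ε) (π - Real.arccos ε) <;>
  by_cases h2 : φ ∈ Phi b <;>
  simp [rho, inSstar, Phi, Set.indicator_apply, h1, h2] at *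

lemma master (ε b : ℝ) (hε0 : 0 < ε) (hε1 : ε ≤ 1) (hb0 : 0 < b) (hb1 : b ≤ π / 2)
    (H G : ℝ → ℝ) (hH : Continuous H) (hG : Continuous G) :
    (∫ θ in (0:ℝ)..π, ∫ φ in (0:ℝ)..(2 * π), (H θ * G φ) * rho ε b θ φ * Real.sin θ)
      = (1 / (8 * b * ε)) *
        ((∫ θ in Real.arccos ε..(π - Real.arccos ε), H θ * Real.sin θ) *
          ((∫ φ in (0:ℝ)..b, G φ) + (∫ φ in (π - b)..π, G φ) + (∫ φ in π..(π + b), G φ) +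
            (∫ φ in (2 * π - b)..(2 * π), G φ))) := by
  have hπ := Real.pi_pos
  set a := Real.arccos ε with ha_def
  set c : ℝ := 1 / (8 * b * ε) with hc_def
  have ha0 : 0 ≤ a := Real.arccos_nonneg ε
  have ha2 : a ≤ π / 2 := Real.arccos_le_pi_div_two.2 hε0.le
  -- the φ-integral of the indicator
  set Pv : ℝ := ∫ φ in (0:ℝ)..(2 * π), Set.indicator (Phi b) (fun x => c * G x) φ with hPv
  have hGind : ∀ φ : ℝ, G φ * Set.indicator (Phi b) (fun _ => c) φ
      = Set.indicator (Phi b) (fun x => c * G x) φ := by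
    intro φ; by_cases h : φ ∈ Phi b <;> simp [h, mul_comm]
  have inner_eq : ∀ θ : ℝ,
      (∫ φ in (0:ℝ)..(2 * π), (H θ * G φ) * rho ε b θ φ * Real.sin θ)
        = (Set.indicator (Set.Icc a (π - a)) (fun _ => (1:ℝ)) θ * H θ * Real.sin θ) * Pv := by
    intro θ
    rw [hPv, ← intervalIntegral.integral_const_mul]
    apply intervalIntegral.integral_congr
    intro φ _
    show H θ * G φ * rho ε b θ φ * Real.sin θ
      = (Set.Icc a (π - a)).indicator (fun _ => (1:ℝ)) θ * H θ * Real.sin θ *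
        (Phi b).indicator (fun x => c * G x) φ
    rw [rho_eq, ← hGind φ]
    ring
  simp only [inner_eq]
  rw [intervalIntegral.integral_mul_const]
  have houter : ∀ θ : ℝ,
      Set.indicator (Set.Icc a (π - a)) (fun _ => (1:ℝ)) θ * H θ * Real.sin θ
        = Set.indicator (Set.Icc a (π - a)) (fun x => H x * Real.sin x) θ := by
    intro θ; by_cases h : θ ∈ Set.Icc a (π - a) <;> simp [h]
  simp only [houter]
  -- compute the θ integral
  have hIθ : (∫ θ in (0:ℝ)..π,
      Set.indicator (Set.Icc a (π - a)) (fun x => H x * Real.sin x) θ)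
      = ∫ θ in a..(π - a), H θ * Real.sin θ := by
    have hii := ii_indicator (f := fun x => H x * Real.sin x) (hH.mul Real.continuous_sin)
      (measurableSet_Icc (a := a) (b := π - a))
    have h1 : a ≤ π - a := by linarith
    have split1 : (∫ θ in (0:ℝ)..π,
        Set.indicator (Set.Icc a (π - a)) (fun x => H x * Real.sin x) θ)
        = (∫ θ in (0:ℝ)..a, Set.indicator (Set.Icc a (π - a)) (fun x => H x * Real.sin x) θ)
          + (∫ θ in a..(π - a), Set.indicator (Set.Icc a (π - a)) (fun x => H x * Real.sin x) θ)
          + (∫ θ in (π - a)..π,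
              Set.indicator (Set.Icc a (π - a)) (fun x => H x * Real.sin x) θ) := by
      rw [intervalIntegral.integral_add_adjacent_intervals (hii 0 a) (hii a (π - a)),
        intervalIntegral.integral_add_adjacent_intervals
          (IntervalIntegrable.trans (hii 0 a) (hii a (π - a))) (hii (π - a) π)]
    rw [split1]
    have e1 : (∫ θ in (0:ℝ)..a,
        Set.indicator (Set.Icc a (π - a)) (fun x => H x * Real.sin x) θ) = 0 := by
      rw [integral_congr_Ioo ha0 (g := fun _ => (0:ℝ))
        (fun x hx => Set.indicator_of_notMem
          (fun hmem => absurd hmem.1 (not_le.2 hx.2)) _)]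
      simp
    have e2 : (∫ θ in (π - a)..π,
        Set.indicator (Set.Icc a (π - a)) (fun x => H x * Real.sin x) θ) = 0 := by
      rw [integral_congr_Ioo (by linarith : π - a ≤ π) (g := fun _ => (0:ℝ))
        (fun x hx => Set.indicator_of_notMem
          (fun hmem => absurd hmem.2 (not_le.2 hx.1)) _)]
      simp
    have e3 : (∫ θ in a..(π - a),
        Set.indicator (Set.Icc a (π - a)) (fun x => H x * Real.sin x) θ)
        = ∫ θ in a..(π - a), H θ * Real.sin θ := by
      apply integral_congr_Ioo h1
      intro x hx
      exact Set.indicator_of_mem (Set.mem_Icc.mpr ⟨hx.1.le, hx.2.le⟩) _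
    rw [e1, e2, e3]; ring
  rw [hIθ]
  -- compute the φ integral Pv
  have hcG : Continuous fun x => c * G x := continuous_const.mul hG
  have hjj := ii_indicator hcG (measurable_Phi b)
  have hb2 : b ≤ π - b := by linarith
  have hb3 : π + b ≤ 2 * π - b := by linarith
  have notPhi : ∀ x : ℝ, b < x → x < π - b → x ∉ Phi b ∧ True := by
    intro x h1 h2
    constructor
    · intro hmem
      rcases hmem with ((h | h) | h) | h
      · exact absurd h.2 (not_le.2 h1)
      · exact absurd h.1 (not_le.2 h2)
      · exact absurd h.1 (not_le.2 (by linarith))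
      · exact absurd h.1 (not_le.2 (by linarith))
    · trivial
  have notPhi2 : ∀ x : ℝ, π + b < x → x < 2 * π - b → x ∉ Phi b := by
    intro x h1 h2 hmem
    rcases hmem with ((h | h) | h) | h
    · exact absurd h.2 (not_le.2 (by linarith))
    · exact absurd h.2 (not_le.2 (by linarith))
    · exact absurd h.2 (not_le.2 h1)
    · exact absurd h.1 (not_le.2 h2)
  have split2 : Pv
      = (∫ φ in (0:ℝ)..b, Set.indicator (Phi b) (fun x => c * G x) φ)
        + (∫ φ in b..(π - b), Set.indicator (Phi b) (fun x => c * G x) φ)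
        + (∫ φ in (π - b)..π, Set.indicator (Phi b) (fun x => c * G x) φ)
        + (∫ φ in π..(π + b), Set.indicator (Phi b) (fun x => c * G x) φ)
        + (∫ φ in (π + b)..(2 * π - b), Set.indicator (Phi b) (fun x => c * G x) φ)
        + (∫ φ in (2 * π - b)..(2 * π), Set.indicator (Phi b) (fun x => c * G x) φ) := by
    rw [hPv,
      intervalIntegral.integral_add_adjacent_intervals (hjj 0 b) (hjj b (π - b)),
      intervalIntegral.integral_add_adjacent_intervals (hjj 0 (π - b)) (hjj (π - b) π),
      intervalIntegral.integral_add_adjacent_intervals (hjj 0 π) (hjj π (π + b)),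
      intervalIntegral.integral_add_adjacent_intervals (hjj 0 (π + b)) (hjj (π + b) (2 * π - b)),
      intervalIntegral.integral_add_adjacent_intervals (hjj 0 (2 * π - b)) (hjj (2 * π - b) (2 * π))]
  have onPhi : ∀ (l u : ℝ), l ≤ u → (∀ x ∈ Set.Ioo l u, x ∈ Phi b) →
      (∫ φ in l..u, Set.indicator (Phi b) (fun x => c * G x) φ)
        = c * ∫ φ in l..u, G φ := by
    intro l u hlu hsub
    rw [← intervalIntegral.integral_const_mul]
    apply integral_congr_Ioo hlu
    intro x hx
    exact Set.indicator_of_mem (hsub x hx) _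
  have offPhi : ∀ (l u : ℝ), l ≤ u → (∀ x ∈ Set.Ioo l u, x ∉ Phi b) →
      (∫ φ in l..u, Set.indicator (Phi b) (fun x => c * G x) φ) = 0 := by
    intro l u hlu hsub
    rw [integral_congr_Ioo hlu (g := fun _ => (0:ℝ))]
    · simp
    · intro x hx; exact Set.indicator_of_notMem (hsub x hx) _

  rw [split2,
    onPhi 0 b hb0.le (fun x hx => Or.inl (Or.inl (Or.inl ⟨hx.1.le, hx.2.le⟩))),
    offPhi b (π - b) hb2 (fun x hx => (notPhi x hx.1 hx.2).1),
    onPhi (π - b) π (by linarith) (fun x hx => Or.inl (Or.inl (Or.inr ⟨hx.1.le, hx.2.le⟩))),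
    onPhi π (π + b) (by linarith) (fun x hx => Or.inl (Or.inr ⟨hx.1.le, hx.2.le⟩)),
    offPhi (π + b) (2 * π - b) hb3 (fun x hx => notPhi2 x hx.1 hx.2),
    onPhi (2 * π - b) (2 * π) (by linarith) (fun x hx => Or.inr ⟨hx.1.le, hx.2.le⟩)]
  ring

lemma congr2 {f g : ℝ → ℝ → ℝ} (h : ∀ θ φ, f θ φ = g θ φ) :
    (∫ θ in (0:ℝ)..π, ∫ φ in (0:ℝ)..(2 * π), f θ φ)
      = ∫ θ in (0:ℝ)..π, ∫ φ in (0:ℝ)..(2 * π), g θ φ :=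
  intervalIntegral.integral_congr fun θ _ => intervalIntegral.integral_congr fun φ _ => h θ φ

lemma int_cos_sq_sin (l u : ℝ) :
    ∫ x in l..u, Real.cos x ^ 2 * Real.sin x = (Real.cos l ^ 3 - Real.cos u ^ 3) / 3 := by
  rw [show (∫ x in l..u, Real.cos x ^ 2 * Real.sin x)
      = ∫ x in l..u, Real.sin x * Real.cos x ^ 2 from
    intervalIntegral.integral_congr fun x _ => by ring, integral_sin_mul_cos_sq]

lemma int_sin_sq_sin (l u : ℝ) :
    ∫ x in l..u, Real.sin x ^ 2 * Real.sin x
      = Real.cos l - Real.cos u - (Real.cos l ^ 3 - Real.cos u ^ 3) / 3 := by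
  rw [show (∫ x in l..u, Real.sin x ^ 2 * Real.sin x)
      = ∫ x in l..u, Real.sin x ^ 3 from
    intervalIntegral.integral_congr fun x _ => by ring, integral_sin_pow_three]

lemma int_cossin_sin (l u : ℝ) :
    ∫ x in l..u, Real.cos x * Real.sin x * Real.sin x
      = (Real.sin u ^ 3 - Real.sin l ^ 3) / 3 := by
  rw [show (∫ x in l..u, Real.cos x * Real.sin x * Real.sin x)
      = ∫ x in l..u, Real.sin x ^ 2 * Real.cos x from
    intervalIntegral.integral_congr fun x _ => by ring, integral_sin_sq_mul_cos]

end MomentsAux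

theorem moments_of_rho (ε b : ℝ) (hε0 : 0 < ε) (hε1 : ε ≤ 1) (hb0 : 0 < b)
    (hb1 : b ≤ π / 2) :
    (∫ θ in (0:ℝ)..π, ∫ φ in (0:ℝ)..(2 * π),
        rho ε b θ φ * Real.sin θ) = 1 ∧
    (∫ θ in (0:ℝ)..π, ∫ φ in (0:ℝ)..(2 * π),
        (Real.cos θ) ^ 2 * rho ε b θ φ * Real.sin θ) = ε ^ 2 / 3 ∧
    (∫ θ in (0:ℝ)..π, ∫ φ in (0:ℝ)..(2 * π),
        (Real.sin θ * Real.sin φ) ^ 2 * rho ε b θ φ * Real.sin θ)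
      = (1 / 2 - Real.sin (2 * b) / (4 * b)) * (1 - ε ^ 2 / 3) ∧
    (∫ θ in (0:ℝ)..π, ∫ φ in (0:ℝ)..(2 * π),
        (Real.sin θ * Real.cos φ) ^ 2 * rho ε b θ φ * Real.sin θ)
      = (1 / 2 + Real.sin (2 * b) / (4 * b)) * (1 - ε ^ 2 / 3) ∧
    (∫ θ in (0:ℝ)..π, ∫ φ in (0:ℝ)..(2 * π),
        (Real.cos θ) * (Real.sin θ * Real.sin φ) * rho ε b θ φ * Real.sin θ) = 0 ∧
    (∫ θ in (0:ℝ)..π, ∫ φ in (0:ℝ)..(2 * π),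
        (Real.sin θ * Real.sin φ) * (Real.sin θ * Real.cos φ) * rho ε b θ φ * Real.sin θ) = 0 ∧
    (∫ θ in (0:ℝ)..π, ∫ φ in (0:ℝ)..(2 * π),
        (Real.sin θ * Real.cos φ) * (Real.cos θ) * rho ε b θ φ * Real.sin θ) = 0 := by
  have hπ := Real.pi_pos
  have hca : Real.cos (Real.arccos ε) = ε := Real.cos_arccos (by linarith) hε1
  refine ⟨?_, ?_, ?_, ?_, ?_, ?_, ?_⟩
  · have m := MomentsAux.master ε b hε0 hε1 hb0 hb1 (fun _ => (1:ℝ)) (fun _ => (1:ℝ))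
      continuous_const continuous_const
    refine ((MomentsAux.congr2 (fun θ φ => by ring :
      ∀ θ φ, rho ε b θ φ * Real.sin θ
        = ((1:ℝ) * (1:ℝ)) * rho ε b θ φ * Real.sin θ)).trans (m.trans ?_))
    simp only [one_mul, integral_sin, intervalIntegral.integral_const, smul_eq_mul, mul_one,
      Real.cos_pi_sub, hca]
    field_simp
    ring
  · have m := MomentsAux.master ε b hε0 hε1 hb0 hb1 (fun θ => Real.cos θ ^ 2) (fun _ => (1:ℝ))
      (by fun_prop) continuous_const
    refine ((MomentsAux.congr2 (fun θ φ => by ring :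
      ∀ θ φ, (Real.cos θ) ^ 2 * rho ε b θ φ * Real.sin θ
        = (Real.cos θ ^ 2 * (1:ℝ)) * rho ε b θ φ * Real.sin θ)).trans (m.trans ?_))
    simp only [one_mul, mul_one, MomentsAux.int_cos_sq_sin, intervalIntegral.integral_const,
      smul_eq_mul, Real.cos_pi_sub, hca]
    field_simp
    ring
  · have m := MomentsAux.master ε b hε0 hε1 hb0 hb1 (fun θ => Real.sin θ ^ 2)
      (fun φ => Real.sin φ ^ 2) (by fun_prop) (by fun_prop)
    refine ((MomentsAux.congr2 (fun θ φ => by ring :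
      ∀ θ φ, (Real.sin θ * Real.sin φ) ^ 2 * rho ε b θ φ * Real.sin θ
        = (Real.sin θ ^ 2 * Real.sin φ ^ 2) * rho ε b θ φ * Real.sin θ)).trans (m.trans ?_))
    simp only [MomentsAux.int_sin_sq_sin, integral_sin_sq, Real.cos_pi_sub, Real.sin_pi_sub,
      Real.sin_pi, Real.cos_pi, Real.sin_zero, Real.cos_zero, Real.sin_two_pi, Real.cos_two_pi,
      Real.sin_add, Real.cos_add, Real.sin_sub, Real.cos_sub, hca]
    rw [Real.sin_two_mul]
    field_simp
    ring
  · have m := MomentsAux.master ε b hε0 hε1 hb0 hb1 (fun θ => Real.sin θ ^ 2)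
      (fun φ => Real.cos φ ^ 2) (by fun_prop) (by fun_prop)
    refine ((MomentsAux.congr2 (fun θ φ => by ring :
      ∀ θ φ, (Real.sin θ * Real.cos φ) ^ 2 * rho ε b θ φ * Real.sin θ
        = (Real.sin θ ^ 2 * Real.cos φ ^ 2) * rho ε b θ φ * Real.sin θ)).trans (m.trans ?_))
    simp only [MomentsAux.int_sin_sq_sin, integral_cos_sq, Real.cos_pi_sub, Real.sin_pi_sub,
      Real.sin_pi, Real.cos_pi, Real.sin_zero, Real.cos_zero, Real.sin_two_pi, Real.cos_two_pi,
      Real.sin_add, Real.cos_add, Real.sin_sub, Real.cos_sub, hca]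
    rw [Real.sin_two_mul]
    field_simp
    ring
  · have m := MomentsAux.master ε b hε0 hε1 hb0 hb1 (fun θ => Real.cos θ * Real.sin θ)
      (fun φ => Real.sin φ) (by fun_prop) (by fun_prop)
    refine ((MomentsAux.congr2 (fun θ φ => by ring :
      ∀ θ φ, (Real.cos θ) * (Real.sin θ * Real.sin φ) * rho ε b θ φ * Real.sin θ
        = (Real.cos θ * Real.sin θ * Real.sin φ) * rho ε b θ φ * Real.sin θ)).trans (m.trans ?_))
    simp only [MomentsAux.int_cossin_sin, integral_sin, Real.cos_pi_sub, Real.sin_pi_sub,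
      Real.sin_pi, Real.cos_pi, Real.sin_zero, Real.cos_zero, Real.sin_two_pi, Real.cos_two_pi,
      Real.sin_add, Real.cos_add, Real.sin_sub, Real.cos_sub, hca]
    ring
  · have m := MomentsAux.master ε b hε0 hε1 hb0 hb1 (fun θ => Real.sin θ ^ 2)
      (fun φ => Real.sin φ * Real.cos φ) (by fun_prop) (by fun_prop)
    refine ((MomentsAux.congr2 (fun θ φ => by ring :
      ∀ θ φ, (Real.sin θ * Real.sin φ) * (Real.sin θ * Real.cos φ) * rho ε b θ φ * Real.sin θ
        = (Real.sin θ ^ 2 * (Real.sin φ * Real.cos φ)) * rho ε b θ φ * Real.sin θ)).trans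
      (m.trans ?_))
    simp only [MomentsAux.int_sin_sq_sin, integral_sin_mul_cos₁, Real.cos_pi_sub,
      Real.sin_pi_sub, Real.sin_pi, Real.cos_pi, Real.sin_zero, Real.cos_zero, Real.sin_two_pi,
      Real.cos_two_pi, Real.sin_add, Real.cos_add, Real.sin_sub, Real.cos_sub, hca]
    ring
  · have m := MomentsAux.master ε b hε0 hε1 hb0 hb1 (fun θ => Real.cos θ * Real.sin θ)
      (fun φ => Real.cos φ) (by fun_prop) (by fun_prop)
    refine ((MomentsAux.congr2 (fun θ φ => by ring :
      ∀ θ φ, (Real.sin θ * Real.cos φ) * (Real.cos θ) * rho ε b θ φ * Real.sin θ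
        = (Real.cos θ * Real.sin θ * Real.cos φ) * rho ε b θ φ * Real.sin θ)).trans
      (m.trans ?_))
    simp only [MomentsAux.int_cossin_sin, integral_cos, Real.cos_pi_sub, Real.sin_pi_sub,
      Real.sin_pi, Real.cos_pi, Real.sin_zero, Real.cos_zero, Real.sin_two_pi, Real.cos_two_pi,
      Real.sin_add, Real.cos_add, Real.sin_sub, Real.cos_sub, hca]
    ring
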